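/- Let D ≥ 1 be an integer and E = ℂ^D. The linear span R_B of the set {[[x,y]_⊗, z]_⊗ : x, y, z ∈ E} inside E^{⊗3} has dimension D(D²−1)/3, where [u,v]_⊗ := u⊗v − v⊗u (so [[x,y]_⊗,z]_⊗ = x⊗y⊗z − y⊗x⊗z − z⊗x⊗y + z⊗y⊗x). -/

import Mathlib

set_option maxSynthPendingDepth 5
set_option maxRecDepth 8000
set_option synthInstance.maxHeartbeats 1000000

open TensorProduct

noncomputable def parafermionicRelations (D : ℕ) :
    Submodule ℂ ((Fin D → ℂ) ⊗[ℂ] ((Fin D → ℂ) ⊗[ℂ] (Fin D → ℂ))) :=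
  Submodule.span ℂ
    {t | ∃ x y z : Fin D → ℂ,
      t = x ⊗ₜ[ℂ] (y ⊗ₜ[ℂ] z) - y ⊗ₜ[ℂ] (x ⊗ₜ[ℂ] z)
          - z ⊗ₜ[ℂ] (x ⊗ₜ[ℂ] y) + z ⊗ₜ[ℂ] (y ⊗ₜ[ℂ] x)}

namespace ParaAux

variable (D : ℕ)

/-- indicator function -/
def e (q : Fin D × Fin D × Fin D) : Fin D × Fin D × Fin D → ℂ :=
  fun p => if p = q then 1 else 0

/-- the basic relation vectors -/
def w (i j k : Fin D) : Fin D × Fin D × Fin D → ℂ :=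
  e D (i,j,k) - e D (j,i,k) - e D (k,i,j) + e D (k,j,i)

/-- index set for a basis of the relation space -/
def H : Finset (Fin D × Fin D × Fin D) :=
  Finset.univ.filter (fun q => q.1 < q.2.1 ∧ q.1 ≤ q.2.2)

/-- the candidate basis family -/
def v : ↥(H D) → (Fin D × Fin D × Fin D → ℂ) :=
  fun s => w D s.1.1 s.1.2.1 s.1.2.2

variable {D}

lemma w_apply (i j k : Fin D) (p : Fin D × Fin D × Fin D) :
    w D i j k p = (if p = (i,j,k) then 1 else 0) - (if p = (j,i,k) then 1 else 0)
      - (if p = (k,i,j) then 1 else 0) + (if p = (k,j,i) then 1 else 0) := by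
  simp [w, e]

lemma w_diag (i k : Fin D) : w D i i k = 0 := by
  funext p
  simp only [w_apply, Pi.zero_apply]
  split_ifs <;> ring

lemma w_swap (i j k : Fin D) : w D j i k = - w D i j k := by
  funext p
  simp only [w_apply, Pi.neg_apply]
  split_ifs <;> ring

lemma w_rel (i j k : Fin D) : w D i j k = w D k j i - w D k i j := by
  funext p
  simp only [w_apply, Pi.sub_apply]
  split_ifs <;> ring

lemma mem_H {q : Fin D × Fin D × Fin D} :
    q ∈ H D ↔ q.1 < q.2.1 ∧ q.1 ≤ q.2.2 := by
  simp [H]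

/-- membership of basic vectors indexed by `H` -/
lemma w_mem_of_H {i j k : Fin D} (h1 : i < j) (h2 : i ≤ k) :
    w D i j k ∈ Submodule.span ℂ (Set.range (v D)) := by
  exact Submodule.subset_span ⟨⟨(i,j,k), mem_H.mpr ⟨h1, h2⟩⟩, rfl⟩

/-- each basic vector lies in the span of the `H`-indexed family -/
lemma w_mem (i j k : Fin D) :
    w D i j k ∈ Submodule.span ℂ (Set.range (v D)) := by
  rcases lt_trichotomy i j with hij | rfl | hij
  · by_cases hik : i ≤ k
    · exact w_mem_of_H hij hik
    · push_neg at hik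
      rw [w_rel]
      exact Submodule.sub_mem _
        (w_mem_of_H (hik.trans hij) hik.le)
        (w_mem_of_H hik (hik.trans hij).le)
  · rw [w_diag]; exact Submodule.zero_mem _
  · rw [show w D i j k = - w D j i k from by rw [w_swap]]
    apply Submodule.neg_mem
    by_cases hjk : j ≤ k
    · exact w_mem_of_H hij hjk
    · push_neg at hjk
      rw [w_rel]
      exact Submodule.sub_mem _
        (w_mem_of_H (hjk.trans hij) hjk.le)
        (w_mem_of_H hjk (hjk.trans hij).le)

/-- orthogonality: off-diagonal evaluation vanishes -/
lemma w_eval_ne {q r : Fin D × Fin D × Fin D} (hq : q ∈ H D) (hr : r ∈ H D)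
    (hne : r ≠ q) : w D q.1 q.2.1 q.2.2 r = 0 := by
  obtain ⟨i, j, k⟩ := q
  obtain ⟨a, b, c⟩ := r
  rw [mem_H] at hq hr
  simp only at hq hr
  obtain ⟨hij, hik⟩ := hq
  obtain ⟨hab, hac⟩ := hr
  rw [w_apply]
  rw [if_neg hne, if_neg, if_neg, if_neg]
  · ring
  · rintro h
    rw [Prod.ext_iff, Prod.ext_iff] at h
    obtain ⟨h1, h2, h3⟩ := h
    dsimp only at h1 h2 h3
    have hik2 : i = k := le_antisymm hik (by rw [← h1, ← h3]; exact hac)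
    exact hne (by rw [h1, h2, h3, hik2])
  · rintro h
    rw [Prod.ext_iff, Prod.ext_iff] at h
    obtain ⟨h1, h2, h3⟩ := h
    dsimp only at h1 h2 h3
    have : (k : Fin D) < i := by rw [← h1, ← h2]; exact hab
    exact absurd this (not_lt.mpr hik)
  · rintro h
    rw [Prod.ext_iff, Prod.ext_iff] at h
    obtain ⟨h1, h2, h3⟩ := h
    dsimp only at h1 h2 h3
    have : (j : Fin D) < i := by rw [← h1, ← h2]; exact hab
    exact absurd this (not_lt.mpr hij.le)

/-- diagonal evaluation is nonzero -/
lemma w_eval_self {q : Fin D × Fin D × Fin D} (hq : q ∈ H D) :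
    w D q.1 q.2.1 q.2.2 q = if q.1 = q.2.2 then 2 else 1 := by
  obtain ⟨i, j, k⟩ := q
  rw [mem_H] at hq
  simp only at hq ⊢
  obtain ⟨hij, hik⟩ := hq
  rw [w_apply]
  rw [if_pos rfl, if_neg, if_neg]
  · by_cases h : i = k
    · subst h; rw [if_pos rfl, if_pos rfl]; ring
    · rw [if_neg, if_neg h]
      · ring
      · rintro hh
        rw [Prod.ext_iff, Prod.ext_iff] at hh
        obtain ⟨h1, h2, h3⟩ := hh
        dsimp only at h1 h2 h3
        exact h h1
  · rintro hh
    rw [Prod.ext_iff, Prod.ext_iff] at hh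
    obtain ⟨h1, h2, h3⟩ := hh
    dsimp only at h1 h2 h3
    exact lt_irrefl _ (h2 ▸ hij)
  · rintro hh
    rw [Prod.ext_iff, Prod.ext_iff] at hh
    obtain ⟨h1, h2, h3⟩ := hh
    dsimp only at h1 h2 h3
    exact lt_irrefl _ (h1 ▸ hij)

lemma v_indep : LinearIndependent ℂ (v D) := by
  rw [Fintype.linearIndependent_iff]
  intro g hg s
  have hev := congrFun hg s.1
  rw [Finset.sum_apply] at hev
  rw [Finset.sum_eq_single s] at hev
  · simp only [Pi.smul_apply, smul_eq_mul, Pi.zero_apply] at hev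
    have hval : v D s s.1 = if (s.1 : Fin D × Fin D × Fin D).1 = s.1.2.2 then 2 else 1 :=
      w_eval_self s.2
    rw [hval] at hev
    split_ifs at hev with h
    · simpa using mul_eq_zero.mp hev
    · simpa using mul_eq_zero.mp hev
  · intro t _ hts
    have : v D t s.1 = 0 := w_eval_ne t.2 s.2 (by
      intro h; exact hts (Subtype.ext h).symm)
    simp [Pi.smul_apply, this]
  · intro h; exact absurd (Finset.mem_univ s) h


/-- coordinate form of the generating relation vectors -/
def F (x y z : Fin D → ℂ) : Fin D × Fin D × Fin D → ℂ :=
  fun p => x p.1 * (y p.2.1 * z p.2.2) - y p.1 * (x p.2.1 * z p.2.2)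
    - z p.1 * (x p.2.1 * y p.2.2) + z p.1 * (y p.2.1 * x p.2.2)

lemma F_expand (x y z : Fin D → ℂ) :
    F x y z = ∑ q : Fin D × Fin D × Fin D,
      (x q.1 * y q.2.1 * z q.2.2) • w D q.1 q.2.1 q.2.2 := by
  funext p
  rw [Finset.sum_apply]
  simp only [Pi.smul_apply, smul_eq_mul, w_apply]
  have h1 : (∑ q : Fin D × Fin D × Fin D,
      (if p = (q.1, q.2.1, q.2.2) then x q.1 * y q.2.1 * z q.2.2 else 0))
      = x p.1 * y p.2.1 * z p.2.2 := by
    rw [Finset.sum_eq_single p]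
    · simp
    · rintro q - hne; rw [if_neg]; rintro rfl; exact hne rfl
    · simp
  have h2 : (∑ q : Fin D × Fin D × Fin D,
      (if p = (q.2.1, q.1, q.2.2) then x q.1 * y q.2.1 * z q.2.2 else 0))
      = x p.2.1 * y p.1 * z p.2.2 := by
    rw [Finset.sum_eq_single (p.2.1, p.1, p.2.2)]
    · simp
    · rintro q - hne; rw [if_neg]; rintro rfl; exact hne rfl
    · simp
  have h3 : (∑ q : Fin D × Fin D × Fin D,
      (if p = (q.2.2, q.1, q.2.1) then x q.1 * y q.2.1 * z q.2.2 else 0))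
      = x p.2.1 * y p.2.2 * z p.1 := by
    rw [Finset.sum_eq_single (p.2.1, p.2.2, p.1)]
    · simp
    · rintro q - hne; rw [if_neg]; rintro rfl; exact hne rfl
    · simp
  have h4 : (∑ q : Fin D × Fin D × Fin D,
      (if p = (q.2.2, q.2.1, q.1) then x q.1 * y q.2.1 * z q.2.2 else 0))
      = x p.2.2 * y p.2.1 * z p.1 := by
    rw [Finset.sum_eq_single (p.2.2, p.2.1, p.1)]
    · simp
    · rintro q - hne; rw [if_neg]; rintro rfl; exact hne rfl
    · simp
  calc F x y z p
      = (x p.1 * y p.2.1 * z p.2.2) - (x p.2.1 * y p.1 * z p.2.2)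
        - (x p.2.1 * y p.2.2 * z p.1) + (x p.2.2 * y p.2.1 * z p.1) := by
        simp only [F]; ring
    _ = _ := by
        rw [← h1, ← h2, ← h3, ← h4]
        rw [← Finset.sum_sub_distrib, ← Finset.sum_sub_distrib, ← Finset.sum_add_distrib]
        apply Finset.sum_congr rfl
        intro q _
        split_ifs <;> ring

lemma F_mem (x y z : Fin D → ℂ) :
    F x y z ∈ Submodule.span ℂ (Set.range (v D)) := by
  rw [F_expand]
  exact Submodule.sum_mem _ fun q _ => Submodule.smul_mem _ _ (w_mem q.1 q.2.1 q.2.2)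

lemma w_eq_F (i j k : Fin D) :
    w D i j k = F (Pi.single i 1) (Pi.single j 1) (Pi.single k 1) := by
  funext p
  have key : ∀ (a b c : Fin D),
      (Pi.single a 1 : Fin D → ℂ) p.1 * ((Pi.single b 1 : Fin D → ℂ) p.2.1 * (Pi.single c 1 : Fin D → ℂ) p.2.2)
      = if p = (a, b, c) then (1:ℂ) else 0 := by
    intro a b c
    simp only [Pi.single_apply, Prod.ext_iff]
    split_ifs <;> simp_all
  simp only [w_apply, F, key]

end ParaAux

section Counting

open ParaAux Finset

lemma paraCount_sum (n : ℕ) : 3 * (∑ m ∈ Finset.range n, m * (m + 1)) + n = n ^ 3 := by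
  induction n with
  | zero => simp
  | succ n ih =>
    rw [Finset.sum_range_succ]
    have ihz : (3 * (∑ m ∈ Finset.range n, m * (m + 1)) + n : ℤ) = n ^ 3 := by
      exact_mod_cast ih
    zify
    push_cast at ihz ⊢
    linear_combination ihz

lemma count_lt (D m : ℕ) : (∑ j ∈ Finset.range D, if m < j then 1 else 0) = D - (m + 1) := by
  induction D with
  | zero => simp
  | succ D ih =>
    rw [Finset.sum_range_succ, ih]
    split_ifs with h <;> omega

lemma count_le (D m : ℕ) : (∑ j ∈ Finset.range D, if m ≤ j then 1 else 0) = D - m := by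
  induction D with
  | zero => simp
  | succ D ih =>
    rw [Finset.sum_range_succ, ih]
    split_ifs with h <;> omega

lemma card_H (D : ℕ) : 3 * (H D).card + D = D ^ 3 := by
  have h1 : (H D).card = ∑ i : Fin D, ∑ j : Fin D, ∑ k : Fin D,
      if i < j ∧ i ≤ k then 1 else 0 := by
    rw [H, Finset.card_filter]
    rw [Fintype.sum_prod_type]
    congr 1; funext i
    rw [Fintype.sum_prod_type]
  have h2 : ∀ i : Fin D, (∑ j : Fin D, ∑ k : Fin D,
      (if i < j ∧ i ≤ k then 1 else 0) : ℕ)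
      = (D - (i.1 + 1)) * (D - i.1) := by
    intro i
    have : ∀ j k : Fin D, (if i < j ∧ i ≤ k then 1 else 0)
        = (if i < j then 1 else 0) * (if i ≤ k then 1 else 0) := by
      intro j k; split_ifs <;> simp_all
    simp only [this]
    rw [← Finset.sum_mul_sum]
    simp only [Fin.lt_def, Fin.le_def]
    congr 1
    · rw [Fin.sum_univ_eq_sum_range (fun n => if i.1 < n then 1 else 0)]
      exact count_lt D i.1
    · rw [Fin.sum_univ_eq_sum_range (fun n => if i.1 ≤ n then 1 else 0)]
      exact count_le D i.1
  rw [h1]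
  simp only [h2]
  rw [Fin.sum_univ_eq_sum_range (fun n => (D - (n + 1)) * (D - n))]
  have h3 : (∑ i ∈ Finset.range D, (D - (i + 1)) * (D - i))
      = ∑ m ∈ Finset.range D, m * (m + 1) := by
    rw [← Finset.sum_range_reflect (fun m => m * (m + 1)) D]
    apply Finset.sum_congr rfl
    intro i hi
    rw [Finset.mem_range] at hi
    have e1 : D - (i + 1) = D - 1 - i := by omega
    have e2 : D - i = (D - 1 - i) + 1 := by omega
    rw [e1, e2]
  rw [h3]
  exact paraCount_sum D

end Counting

theorem finrank_parafermionicRelations (D : ℕ) (hD : 1 ≤ D) :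
    Module.finrank ℂ ↥(parafermionicRelations D) = D * (D ^ 2 - 1) / 3 := by
  classical
  set b := Pi.basisFun ℂ (Fin D) with hb
  set B := b.tensorProduct (b.tensorProduct b) with hB
  set φ := B.equivFun with hφ
  have hphi_tmul : ∀ x y z : Fin D → ℂ, φ (x ⊗ₜ[ℂ] (y ⊗ₜ[ℂ] z)) =
      fun p : Fin D × Fin D × Fin D => x p.1 * (y p.2.1 * z p.2.2) := by
    intro x y z
    funext p
    obtain ⟨i, j, k⟩ := p
    simp [hφ, hB, hb, Module.Basis.equivFun_apply, Module.Basis.tensorProduct_repr_tmul_apply,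
      Pi.basisFun_repr, smul_eq_mul]
    ring
  have hphi_elem : ∀ x y z : Fin D → ℂ,
      φ (x ⊗ₜ[ℂ] (y ⊗ₜ[ℂ] z) - y ⊗ₜ[ℂ] (x ⊗ₜ[ℂ] z)
        - z ⊗ₜ[ℂ] (x ⊗ₜ[ℂ] y) + z ⊗ₜ[ℂ] (y ⊗ₜ[ℂ] x)) = ParaAux.F x y z := by
    intro x y z
    rw [map_add, map_sub, map_sub, hphi_tmul, hphi_tmul, hphi_tmul, hphi_tmul]
    funext p
    simp only [Pi.add_apply, Pi.sub_apply, ParaAux.F]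
  have hrank := LinearEquiv.finrank_map_eq φ (parafermionicRelations D)
  have hspan : Submodule.map (φ : _ →ₗ[ℂ] _) (parafermionicRelations D)
      = Submodule.span ℂ (Set.range (ParaAux.v D)) := by
    rw [parafermionicRelations, Submodule.map_span]
    apply le_antisymm
    · rw [Submodule.span_le]
      rintro t ⟨u, ⟨x, y, z, rfl⟩, rfl⟩
      simp only [LinearEquiv.coe_coe]
      rw [hphi_elem]
      exact ParaAux.F_mem x y z
    · rw [Submodule.span_le]
      rintro t ⟨s, rfl⟩
      apply Submodule.subset_span
      refine ⟨_, ⟨Pi.single s.1.1 1, Pi.single s.1.2.1 1, Pi.single s.1.2.2 1, rfl⟩, ?_⟩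
      simp only [LinearEquiv.coe_coe]
      rw [hphi_elem]
      exact (ParaAux.w_eq_F _ _ _).symm
  rw [hspan] at hrank
  rw [← hrank, finrank_span_eq_card ParaAux.v_indep, Fintype.card_coe]
  have hcard := card_H D
  have hp : 1 ≤ D ^ 2 := Nat.one_le_pow _ _ (by omega)
  have hcube : D ^ 3 = D * (D ^ 2 - 1) + D := by
    have h : D * (D ^ 2 - 1) + D = D * ((D ^ 2 - 1) + 1) := by ring
    rw [h, Nat.sub_add_cancel hp]; ring
  have h3 : 3 * (ParaAux.H D).card = D * (D ^ 2 - 1) :=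
    Nat.add_right_cancel (hcard.trans hcube)
  rw [← h3, Nat.mul_div_cancel_left _ (by norm_num : 0 < 3)]
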